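/- Let m ≥ 2 be an integer, C_m ≥ 0 a real constant, and let 0 < P ≤ X/2 be real numbers. Let w : ℝ → ℝ be m times continuously differentiable with w(x) = 0 for x ∉ [P, X+P], w(x) = 1 for x ∈ [2P, X], 0 ≤ w(x) ≤ 1 for all x, and |w^{(m)}(x)| ≤ C_m·P^{−m} for all x. Then there exists a constant C', depending only on m and C_m, such that for every b ∈ (0, 2], every M ≥ 0, every measurable F : ℝ → ℂ with |F(t)| ≤ M for all t, and every T ≥ 1: ∫_{|t| ≥ T} |𝑤̃(b + it)|·|F(t)| dt ≤ C' · M · P · X^{b−1} · (X/P)^m · T^{1−m}. -/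

import Mathlib

open MeasureTheory Set

private lemma iterDeriv_zero_fun (n : ℕ) :
    iteratedDeriv n (fun _ : ℝ => (0:ℝ)) = fun _ => 0 := by
  induction n with
  | zero => simp [iteratedDeriv_zero]
  | succ k ih =>
      rw [iteratedDeriv_succ', show deriv (fun _ : ℝ => (0:ℝ)) = fun _ : ℝ => (0:ℝ) by
        funext x; simp, ih]

private lemma iterDeriv_const_fun (c : ℝ) (n : ℕ) (hn : n ≠ 0) :
    iteratedDeriv n (fun _ : ℝ => c) = fun _ => 0 := by
  obtain ⟨k, rfl⟩ := Nat.exists_eq_succ_of_ne_zero hn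
  rw [iteratedDeriv_succ', show deriv (fun _ : ℝ => c) = fun _ : ℝ => (0:ℝ) by
    funext x; simp, iterDeriv_zero_fun]

private lemma iterDeriv_ev_zero {w : ℝ → ℝ} {x : ℝ} (n : ℕ)
    (h : w =ᶠ[nhds x] fun _ => (0:ℝ)) : iteratedDeriv n w x = 0 := by
  rw [Filter.EventuallyEq.iteratedDeriv_eq n h, iterDeriv_zero_fun]

private lemma iterDeriv_ev_const {w : ℝ → ℝ} {x c : ℝ} {n : ℕ} (hn : n ≠ 0)
    (h : w =ᶠ[nhds x] fun _ => c) : iteratedDeriv n w x = 0 := by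
  rw [Filter.EventuallyEq.iteratedDeriv_eq n h, iterDeriv_const_fun c n hn]

private lemma mellin_pointwise (m : ℕ) (hm : 2 ≤ m) (Cm P X : ℝ) (hCm : 0 ≤ Cm)
    (hP : 0 < P) (hPX : P ≤ X / 2) (w : ℝ → ℝ)
    (hw : ContDiff ℝ m w)
    (hsupp : ∀ x : ℝ, x ∉ Set.Icc P (X + P) → w x = 0)
    (hone : ∀ x ∈ Set.Icc (2 * P) X, w x = 1)
    (hder : ∀ x : ℝ, |iteratedDeriv m w x| ≤ Cm / P ^ m)
    (s : ℂ) (hre : 0 < s.re) (him : 1 ≤ |s.im|) :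
    ‖∫ x in Set.Ioi (0:ℝ), (w x : ℂ) * (x:ℂ) ^ (s - 1)‖ ≤
      (Cm / P ^ m) * (2 * P) * (X + P) ^ (s.re + m - 1) / |s.im| ^ m := by
  have hX : 0 < X := by linarith
  set a : ℝ := P / 2 with ha_def
  set c : ℝ := X + 2 * P with hc_def
  have ha0 : 0 < a := by positivity
  have haP : a < P := by simp only [ha_def]; linarith
  have hcXP : X + P < c := by simp only [hc_def]; linarith
  have hac : a ≤ c := by simp only [ha_def, hc_def]; linarith
  have him0 : s.im ≠ 0 := by
    intro h; rw [h] at him; simp at him; linarith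
  have hsk : ∀ k : ℕ, s + (k:ℂ) ≠ 0 := by
    intro k h
    have := congrArg Complex.im h
    simp at this
    exact him0 this
  -- vanishing of iterated derivatives
  have hDlo : ∀ (n : ℕ) (x : ℝ), x < P → iteratedDeriv n w x = 0 := by
    intro n x hx
    refine iterDeriv_ev_zero n (Filter.eventuallyEq_of_mem (Iio_mem_nhds hx) fun y hy => ?_)
    exact hsupp y fun hmem => absurd hmem.1 (not_le.2 hy)
  have hDhi : ∀ (n : ℕ) (x : ℝ), X + P < x → iteratedDeriv n w x = 0 := by
    intro n x hx
    refine iterDeriv_ev_zero n (Filter.eventuallyEq_of_mem (Ioi_mem_nhds hx) fun y hy => ?_)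
    exact hsupp y fun hmem => absurd hmem.2 (not_le.2 hy)
  have hDmid : ∀ x : ℝ, 2 * P < x → x < X → iteratedDeriv m w x = 0 := by
    intro x hx1 hx2
    refine iterDeriv_ev_const (c := 1) (by omega) (Filter.eventuallyEq_of_mem
      (Ioo_mem_nhds hx1 hx2) fun y hy => ?_)
    exact hone y ⟨hy.1.le, hy.2.le⟩
  -- the iterated integrals
  set J : ℕ → ℂ := fun k =>
    ∫ x in a..c, ((iteratedDeriv k w x : ℝ) : ℂ) * (x:ℂ) ^ (s + k - 1) with hJ
  have hstep : ∀ k, k < m → J k = -(J (k+1) / (s + k)) := by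
    intro k hk
    have hu : ∀ x ∈ Set.uIcc a c,
        HasDerivAt (fun y => ((iteratedDeriv k w y : ℝ):ℂ))
          ((iteratedDeriv (k+1) w x : ℝ):ℂ) x := by
      intro x _
      have h1 : HasDerivAt (iteratedDeriv k w) (iteratedDeriv (k+1) w x) x := by
        rw [iteratedDeriv_succ]
        exact ((hw.differentiable_iteratedDeriv k (by exact_mod_cast hk)) x).hasDerivAt
      exact h1.ofReal_comp
    have hxpos : ∀ x ∈ Set.uIcc a c, 0 < x := by
      intro x hx
      rw [Set.uIcc_of_le hac] at hx
      exact lt_of_lt_of_le ha0 hx.1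
    have hv : ∀ x ∈ Set.uIcc a c,
        HasDerivAt (fun y : ℝ => (y:ℂ) ^ (s + k) / (s + k)) ((x:ℂ) ^ (s + k - 1)) x := by
      intro x hx
      have h := hasDerivAt_ofReal_cpow_const' (ne_of_gt (hxpos x hx)) (r := s + k - 1)
        (by intro h; exact hsk k (by linear_combination h))
      simpa using h
    have hu' : IntervalIntegrable (fun y => ((iteratedDeriv (k+1) w y : ℝ):ℂ)) volume a c :=
      (Complex.continuous_ofReal.comp
        (hw.continuous_iteratedDeriv (k+1) (by exact_mod_cast hk))).intervalIntegrable _ _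
    have hv' : IntervalIntegrable (fun y : ℝ => (y:ℂ) ^ (s + k - 1)) volume a c := by
      apply ContinuousOn.intervalIntegrable
      exact fun x hx => (Complex.continuousAt_ofReal_cpow_const x _
        (Or.inr (ne_of_gt (hxpos x hx)))).continuousWithinAt
    have hib := intervalIntegral.integral_mul_deriv_eq_deriv_mul hu hv hu' hv'
    have hda : iteratedDeriv k w a = 0 := hDlo k a haP
    have hdc : iteratedDeriv k w c = 0 := hDhi k c hcXP
    have hrw : (fun x => ((iteratedDeriv (k+1) w x : ℝ):ℂ) * ((x:ℂ) ^ (s+k) / (s+k)))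
        = fun x => (((iteratedDeriv (k+1) w x : ℝ):ℂ) * (x:ℂ) ^ (s + (k+1:ℕ) - 1)) / (s+k) := by
      funext x
      push_cast
      ring
    rw [hda, hdc] at hib
    simp only [Complex.ofReal_zero, zero_mul, sub_zero, zero_sub] at hib
    rw [hJ]
    simp only
    rw [hib, hrw, intervalIntegral.integral_div]
  -- decay estimate
  have hnorm_step : ∀ k, k < m → ‖J k‖ ≤ ‖J (k+1)‖ / |s.im| := by
    intro k hk
    rw [hstep k hk, norm_neg, norm_div]
    apply div_le_div_of_nonneg_left (norm_nonneg _) (by linarith : (0:ℝ) < |s.im|)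
    calc |s.im| = |(s + (k:ℂ)).im| := by simp
      _ ≤ ‖s + (k:ℂ)‖ := Complex.abs_im_le_norm _
  have himpos : (0:ℝ) < |s.im| := by linarith
  have hJ0m : ∀ k, k ≤ m → ‖J 0‖ ≤ ‖J k‖ / |s.im| ^ k := by
    intro k
    induction k with
    | zero => intro _; simp
    | succ k ih =>
        intro hk1
        have hk : k < m := Nat.lt_of_succ_le hk1
        calc ‖J 0‖ ≤ ‖J k‖ / |s.im| ^ k := ih hk.le
          _ ≤ (‖J (k+1)‖ / |s.im|) / |s.im| ^ k := by
              gcongr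
              exact hnorm_step k hk
          _ = ‖J (k+1)‖ / |s.im| ^ (k+1) := by
              rw [div_div, pow_succ]
              ring_nf
  -- bound on J m
  set D : ℝ := (Cm / P ^ m) * (X + P) ^ (s.re + m - 1) with hD_def
  have hD0 : 0 ≤ D := by positivity
  set S : Set ℝ := Icc P (2*P) ∪ Icc X (X+P) with hS_def
  have hSm : MeasurableSet S := (measurableSet_Icc).union measurableSet_Icc
  have hexp0 : 0 ≤ s.re + m - 1 := by
    have : (2:ℝ) ≤ m := by exact_mod_cast hm
    linarith
  have hJm : ‖J m‖ ≤ D * (2 * P) := by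
    have h1 : ‖J m‖ ≤ ∫ x in Ioc a c,
        ‖((iteratedDeriv m w x : ℝ):ℂ) * (x:ℂ) ^ (s + m - 1)‖ := by
      rw [hJ]
      simp only
      rw [intervalIntegral.integral_of_le hac]
      exact norm_integral_le_integral_norm _
    have h2 : ∫ x in Ioc a c, ‖((iteratedDeriv m w x : ℝ):ℂ) * (x:ℂ) ^ (s + m - 1)‖
        ≤ ∫ x in Ioc a c, S.indicator (fun _ => D) x := by
      apply integral_mono_of_nonneg
      · exact Filter.Eventually.of_forall fun x => norm_nonneg _
      · exact ((integrableOn_const (lt_of_le_of_lt (measure_union_le _ _)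
          (ENNReal.add_lt_top.2 ⟨measure_Icc_lt_top, measure_Icc_lt_top⟩)).ne).integrable_indicator hSm).restrict
      · rw [Filter.EventuallyLE, ae_restrict_iff' measurableSet_Ioc]
        apply Filter.Eventually.of_forall
        intro x hx
        have hx0 : 0 < x := lt_of_lt_of_le ha0 hx.1.le
        have hnormpow : ‖(x:ℂ) ^ (s + m - 1)‖ = x ^ (s.re + m - 1) := by
          rw [Complex.norm_cpow_eq_rpow_re_of_pos hx0]
          norm_num
        by_cases hxS : x ∈ S
        · rw [Set.indicator_of_mem hxS]
          have hxle : x ≤ X + P := by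
            rcases hxS with h | h
            · linarith [h.2]
            · exact h.2
          rw [norm_mul, Complex.norm_real, hnormpow, hD_def]
          apply mul_le_mul (hder x) ?_ (by positivity) (by positivity)
          exact Real.rpow_le_rpow hx0.le hxle hexp0
        · rw [Set.indicator_of_notMem hxS]
          have hz : iteratedDeriv m w x = 0 := by
            rcases lt_or_ge x P with h | h
            · exact hDlo m x h
            · have h2P : 2 * P < x := by
                by_contra hcon
                exact hxS (Or.inl ⟨h, not_lt.1 hcon⟩)
              rcases lt_or_ge x X with h' | h'
              · exact hDmid x h2P h'
              · have hXP : X + P < x := by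
                  by_contra hcon
                  exact hxS (Or.inr ⟨h', not_lt.1 hcon⟩)
                exact hDhi m x hXP
          simp [hz]
    have h3 : ∫ x in Ioc a c, S.indicator (fun _ => D) x ≤ ∫ x, S.indicator (fun _ => D) x := by
      apply setIntegral_le_integral
      · exact (integrableOn_const (lt_of_le_of_lt (measure_union_le _ _)
          (ENNReal.add_lt_top.2 ⟨measure_Icc_lt_top, measure_Icc_lt_top⟩)).ne).integrable_indicator hSm
      · exact Filter.Eventually.of_forall fun x => Set.indicator_nonneg (fun _ _ => hD0) x
    have h4 : ∫ x, S.indicator (fun _ => D) x = (volume S).toReal * D := by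
      rw [integral_indicator_const _ hSm]; simp [mul_comm, measureReal_def]
    have h5 : (volume S).toReal ≤ 2 * P := by
      apply ENNReal.toReal_le_of_le_ofReal (by linarith)
      calc volume S ≤ volume (Icc P (2*P)) + volume (Icc X (X+P)) := measure_union_le _ _
        _ = ENNReal.ofReal (2*P - P) + ENNReal.ofReal (X + P - X) := by
            rw [Real.volume_Icc, Real.volume_Icc]
        _ = ENNReal.ofReal (2*P) := by
            rw [← ENNReal.ofReal_add (by linarith) (by linarith)]
            congr 1; ring
    calc ‖J m‖ ≤ (volume S).toReal * D := by
          rw [← h4]; exact le_trans h1 (le_trans h2 h3)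
      _ ≤ (2 * P) * D := by gcongr
      _ = D * (2 * P) := by ring
  -- identify J 0 with the Mellin integral
  have hJ0eq : (∫ x in Set.Ioi (0:ℝ), (w x : ℂ) * (x:ℂ) ^ (s - 1)) = J 0 := by
    have h1 : (∫ x in Set.Ioi (0:ℝ), (w x : ℂ) * (x:ℂ) ^ (s - 1))
        = ∫ x : ℝ, (w x : ℂ) * (x:ℂ) ^ (s - 1) := by
      apply setIntegral_eq_integral_of_forall_compl_eq_zero
      intro x hx
      have : w x = 0 := hsupp x fun hmem => hx (lt_of_lt_of_le hP hmem.1)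
      simp [this]
    have h2 : (∫ x in a..c, (w x : ℂ) * (x:ℂ) ^ (s - 1))
        = ∫ x : ℝ, (w x : ℂ) * (x:ℂ) ^ (s - 1) := by
      apply intervalIntegral.integral_eq_integral_of_support_subset
      intro x hx
      have hwx : w x ≠ 0 := by
        intro h; apply hx; simp [h]
      have hmem : x ∈ Set.Icc P (X + P) := by
        by_contra hcon; exact hwx (hsupp x hcon)
      exact ⟨lt_of_lt_of_le haP hmem.1, le_trans hmem.2 hcXP.le⟩
    rw [h1, ← h2, hJ]
    simp only [iteratedDeriv_zero, Nat.cast_zero, add_zero]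
  rw [hJ0eq]
  calc ‖J 0‖ ≤ ‖J m‖ / |s.im| ^ m := hJ0m m le_rfl
    _ ≤ (D * (2 * P)) / |s.im| ^ m := by gcongr
    _ = (Cm / P ^ m) * (2 * P) * (X + P) ^ (s.re + m - 1) / |s.im| ^ m := by
        rw [hD_def]; ring

theorem mellin_tail_integral_bound (m : ℕ) (hm : 2 ≤ m) (Cm : ℝ) (hCm : 0 ≤ Cm) :
    ∃ C' : ℝ, ∀ (P X : ℝ), 0 < P → P ≤ X / 2 → ∀ w : ℝ → ℝ,
      ContDiff ℝ m w →
      (∀ x : ℝ, x ∉ Set.Icc P (X + P) → w x = 0) →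
      (∀ x ∈ Set.Icc (2 * P) X, w x = 1) →
      (∀ x : ℝ, 0 ≤ w x ∧ w x ≤ 1) →
      (∀ x : ℝ, |iteratedDeriv m w x| ≤ Cm / P ^ m) →
      ∀ b : ℝ, 0 < b → b ≤ 2 → ∀ M : ℝ, 0 ≤ M → ∀ F : ℝ → ℂ, Measurable F →
        (∀ t : ℝ, ‖F t‖ ≤ M) → ∀ T : ℝ, 1 ≤ T →
        (∫ t in {t : ℝ | T ≤ |t|},
            ‖∫ x in Set.Ioi (0 : ℝ), (w x : ℂ) * (x : ℂ) ^ ((b : ℂ) + t * Complex.I - 1)‖ *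
              ‖F t‖) ≤
          C' * M * P * X ^ (b - 1) * (X / P) ^ m * T ^ (1 - (m : ℝ)) := by
  refine ⟨4 * Cm * (3/2 : ℝ) ^ (m + 1), ?_⟩
  intro P X hP hPX w hw hsupp hone hbd hder b hb hb2 M hM F hF hFM T hT
  have hX : 0 < X := by linarith
  have hmR : (2:ℝ) ≤ (m:ℝ) := by exact_mod_cast hm
  set K : ℝ := Cm / P ^ m * (2 * P) * (X + P) ^ (b + m - 1) with hK_def
  have hK0 : 0 ≤ K := by positivity
  set r : ℝ := -(m:ℝ) with hr_def
  have hr1 : r < -1 := by rw [hr_def]; linarith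
  set g : ℝ → ℝ := fun t => M * K * |t| ^ r with hg_def
  have hgeven : ∀ t : ℝ, g (-t) = g t := by intro t; simp [hg_def]
  have hT0 : (0:ℝ) < T := by linarith
  have hA : {t : ℝ | T ≤ |t|} = Iic (-T) ∪ Ici T := by
    ext t
    simp only [Set.mem_setOf_eq, Set.mem_union, Set.mem_Iic, Set.mem_Ici, le_abs, le_neg]
    tauto
  rw [hA]
  have hAmeas : MeasurableSet {t : ℝ | T ≤ |t|} := by
    rw [hA]; exact measurableSet_Iic.union measurableSet_Ici
  -- integrability of g on the two half-lines
  have hgIci : IntegrableOn g (Ici T) := by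
    have h1 : IntegrableOn (fun t : ℝ => M * K * t ^ r) (Ici T) := by
      apply Integrable.const_mul
      exact Iff.mpr integrableOn_Ici_iff_integrableOn_Ioi (integrableOn_Ioi_rpow_of_lt hr1 hT0)
    exact h1.congr_fun (fun t ht => by
      rw [hg_def]; simp only; rw [abs_of_pos (lt_of_lt_of_le hT0 ht)]) measurableSet_Ici
  have h_map_neg : (volume.restrict (Ici T)).map Neg.neg = volume.restrict (Iic (-T)) := by
    conv => rhs; rw [← Measure.map_neg_eq_self (volume : Measure ℝ),
      measurableEmbedding_neg.restrict_map]
    simp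
  have hgIic : IntegrableOn g (Iic (-T)) := by
    rw [IntegrableOn, ← h_map_neg, measurableEmbedding_neg.integrable_map_iff]
    have hcomp : g ∘ Neg.neg = g := funext hgeven
    rw [hcomp]
    exact hgIci
  -- pointwise bound
  have hpt : ∀ t : ℝ, T ≤ |t| →
      ‖∫ x in Set.Ioi (0:ℝ), (w x : ℂ) * (x:ℂ) ^ ((b:ℂ) + t * Complex.I - 1)‖ * ‖F t‖
        ≤ g t := by
    intro t ht
    have hs_re : ((b:ℂ) + (t:ℂ) * Complex.I).re = b := by simp
    have hs_im : ((b:ℂ) + (t:ℂ) * Complex.I).im = t := by simp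
    have h1 := mellin_pointwise m hm Cm P X hCm hP hPX w hw hsupp hone hder
      ((b:ℂ) + (t:ℂ) * Complex.I) (by rw [hs_re]; exact hb)
      (by rw [hs_im]; exact le_trans hT ht)
    rw [hs_re, hs_im, ← hK_def] at h1
    have habs : (0:ℝ) < |t| := lt_of_lt_of_le hT0 ht
    have hgt : g t = M * (K / |t| ^ m) := by
      rw [hg_def]; simp only
      rw [hr_def, Real.rpow_neg (abs_nonneg t), Real.rpow_natCast]
      ring
    rw [hgt]
    calc ‖∫ x in Set.Ioi (0:ℝ), (w x : ℂ) * (x:ℂ) ^ ((b:ℂ) + t * Complex.I - 1)‖ * ‖F t‖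
        ≤ (K / |t| ^ m) * M :=
          mul_le_mul h1 (hFM t) (norm_nonneg _) (by positivity)
      _ = M * (K / |t| ^ m) := mul_comm _ _
  -- comparison with g
  have hstep1 : (∫ t in Iic (-T) ∪ Ici T,
      ‖∫ x in Set.Ioi (0:ℝ), (w x : ℂ) * (x:ℂ) ^ ((b:ℂ) + t * Complex.I - 1)‖ * ‖F t‖)
        ≤ ∫ t in Iic (-T) ∪ Ici T, g t := by
    apply integral_mono_of_nonneg
    · exact Filter.Eventually.of_forall fun t => mul_nonneg (norm_nonneg _) (norm_nonneg _)
    · exact hgIic.union hgIci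
    · rw [Filter.EventuallyLE, ae_restrict_iff' (measurableSet_Iic.union measurableSet_Ici)]
      apply Filter.Eventually.of_forall
      intro t ht
      apply hpt
      rcases ht with h | h
      · exact le_abs.2 (Or.inr (by simpa [le_neg] using h))
      · exact le_abs.2 (Or.inl h)
  -- value of the dominating integral
  have h1m : r + 1 = 1 - (m:ℝ) := by rw [hr_def]; ring
  have hTpow : (0:ℝ) ≤ T ^ (1 - (m:ℝ)) := Real.rpow_nonneg hT0.le _
  have hIoi_le : ∫ t in Ioi T, g t ≤ M * K * T ^ (1 - (m:ℝ)) := by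
    have hcongr : ∫ t in Ioi T, g t = ∫ t in Ioi T, M * K * t ^ r :=
      setIntegral_congr_fun measurableSet_Ioi fun t ht => by
        rw [hg_def]; simp only
        rw [abs_of_pos (lt_trans hT0 ht)]
    rw [hcongr, integral_const_mul, integral_Ioi_rpow_of_lt hr1 hT0]
    have hmm1 : (1:ℝ) ≤ (m:ℝ) - 1 := by linarith
    calc M * K * (-T ^ (r+1) / (r+1))
        = M * K * (T ^ (1 - (m:ℝ)) * (1/((m:ℝ) - 1))) := by
          have hne : (1:ℝ) - (m:ℝ) ≠ 0 := by
            intro h; rw [sub_eq_zero] at h; rw [← h] at hmm1; linarith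
          rw [h1m, neg_div, ← div_neg, neg_sub]
          ring
      _ ≤ M * K * (T ^ (1 - (m:ℝ)) * 1) := by
          gcongr M * K * (T ^ (1 - (m:ℝ)) * ?_)
          rw [div_le_one (by linarith)]; linarith
      _ = M * K * T ^ (1 - (m:ℝ)) := by ring
  have hIci_le : ∫ t in Ici T, g t ≤ M * K * T ^ (1 - (m:ℝ)) := by
    rw [integral_Ici_eq_integral_Ioi]; exact hIoi_le
  have hIic_le : ∫ t in Iic (-T), g t ≤ M * K * T ^ (1 - (m:ℝ)) := by
    have h := integral_comp_neg_Iic (-T) g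
    simp only [neg_neg] at h
    have h2 : ∫ t in Iic (-T), g t = ∫ t in Iic (-T), g (-t) :=
      setIntegral_congr_fun measurableSet_Iic fun t _ => (hgeven t).symm
    rw [h2, h]
    exact hIoi_le
  have hsplit : ∫ t in Iic (-T) ∪ Ici T, g t
      = (∫ t in Iic (-T), g t) + ∫ t in Ici T, g t :=
    setIntegral_union (Set.Iic_disjoint_Ici.2 (not_le.2 (by linarith))) measurableSet_Ici
      hgIic hgIci
  -- final algebra
  have hKle : K ≤ 2 * Cm * (3/2:ℝ)^(m+1) * (P * X ^ (b-1) * (X/P)^m) := by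
    have hexp : (0:ℝ) ≤ b + m - 1 := by linarith
    have h1 : (X+P:ℝ) ^ (b + (m:ℝ) - 1) ≤ (3/2*X) ^ (b + (m:ℝ) - 1) :=
      Real.rpow_le_rpow (by linarith) (by linarith) hexp
    have h2 : ((3/2*X:ℝ)) ^ (b + (m:ℝ) - 1) = (3/2:ℝ) ^ (b + (m:ℝ) - 1) * X ^ (b + (m:ℝ) - 1) :=
      Real.mul_rpow (by norm_num) hX.le
    have h3 : (3/2:ℝ) ^ (b + (m:ℝ) - 1) ≤ (3/2:ℝ) ^ ((m:ℝ)+1) :=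
      Real.rpow_le_rpow_of_exponent_le (by norm_num) (by linarith)
    have h4 : (3/2:ℝ) ^ ((m:ℝ)+1) = (3/2:ℝ) ^ (m+1 : ℕ) := by
      rw [← Real.rpow_natCast (3/2:ℝ) (m+1)]
      push_cast
      ring_nf
    have h5 : X ^ (b + (m:ℝ) - 1) = X ^ (b-1) * X ^ m := by
      rw [← Real.rpow_natCast X m, ← Real.rpow_add hX]
      ring_nf
    have hXP : (X+P:ℝ) ^ (b + (m:ℝ) - 1) ≤ (3/2:ℝ)^(m+1) * (X ^ (b-1) * X ^ m) := by
      calc (X+P:ℝ) ^ (b + (m:ℝ) - 1) ≤ (3/2:ℝ) ^ (b + (m:ℝ) - 1) * X ^ (b + (m:ℝ) - 1) := by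
            rw [← h2]; exact h1
        _ ≤ (3/2:ℝ) ^ ((m:ℝ)+1) * X ^ (b + (m:ℝ) - 1) := by
            gcongr
        _ = (3/2:ℝ)^(m+1) * (X ^ (b-1) * X ^ m) := by rw [h4, h5]
    have hPm : (0:ℝ) < P ^ m := by positivity
    calc K = Cm / P ^ m * (2 * P) * (X + P) ^ (b + (m:ℝ) - 1) := by rw [hK_def]
      _ ≤ Cm / P ^ m * (2 * P) * ((3/2:ℝ)^(m+1) * (X ^ (b-1) * X ^ m)) := by
          gcongr
      _ = 2 * Cm * (3/2:ℝ)^(m+1) * (P * X ^ (b-1) * (X/P)^m) := by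
          rw [div_pow]
          field_simp
          rw [mul_assoc, ← mul_pow, mul_div_assoc', mul_div_cancel_left₀ X hP.ne']
  calc (∫ t in Iic (-T) ∪ Ici T,
      ‖∫ x in Set.Ioi (0:ℝ), (w x : ℂ) * (x:ℂ) ^ ((b:ℂ) + t * Complex.I - 1)‖ * ‖F t‖)
      ≤ ∫ t in Iic (-T) ∪ Ici T, g t := hstep1
    _ = (∫ t in Iic (-T), g t) + ∫ t in Ici T, g t := hsplit
    _ ≤ M * K * T ^ (1 - (m:ℝ)) + M * K * T ^ (1 - (m:ℝ)) := add_le_add hIic_le hIci_le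
    _ = 2 * (M * K * T ^ (1 - (m:ℝ))) := by ring
    _ ≤ 2 * (M * (2 * Cm * (3/2:ℝ)^(m+1) * (P * X ^ (b-1) * (X/P)^m)) * T ^ (1 - (m:ℝ))) := by
        gcongr
    _ = 4 * Cm * (3/2:ℝ)^(m+1) * M * P * X ^ (b-1) * (X/P)^m * T ^ (1 - (m:ℝ)) := by ring
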